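/- Let F ⊂ ℝ² be an empty integral polygon with edges S, and for each edge let ℓ_S be the support function of S with respect to F (primitive integral affine with ℓ_S|_S = 0, ℓ_S ≥ 0 on F) and c_S the lattice length of S. Then the weighted sum Σ_{S ⊂ ∂F} c_S ℓ_S is a constant function on ℝ². -/

import Mathlib

/-- A point of `ℝ²` is a lattice point if all its coordinates are integers. -/
def IsLatticePt (x : Fin 2 → ℝ) : Prop := ∀ i, ∃ m : ℤ, x i = (m : ℝ)

/-- The inclusion `ℤ² → ℝ²`. -/
def castPt (p : Fin 2 → ℤ) : Fin 2 → ℝ := fun i => (p i : ℝ)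

/-- The integral affine function on `ℝ²` with linear coefficients `c : Fin 2 → ℤ` and
constant term `d : ℤ`. -/
def affZ (c : Fin 2 → ℤ) (d : ℤ) (x : Fin 2 → ℝ) : ℝ :=
  (c 0 : ℝ) * x 0 + (c 1 : ℝ) * x 1 + (d : ℝ)

/-! ### Auxiliary material -/

/-- The planar cross product (determinant) of two vectors in `ℝ²`. -/
def crossR (a b : Fin 2 → ℝ) : ℝ := a 0 * b 1 - a 1 * b 0

lemma castPt_inj : Function.Injective castPt := by
  intro p q h
  funext i
  have : (p i : ℝ) = (q i : ℝ) := congrFun h i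
  exact_mod_cast this

lemma isClosed_segment' (a b : Fin 2 → ℝ) : IsClosed (segment ℝ a b) := by
  rw [← convexHull_pair]
  exact (((Set.finite_singleton b).insert a).isCompact_convexHull ℝ).isClosed

lemma cross_parallel {U W : Fin 2 → ℝ} (hU : U ≠ 0) (h : crossR U W = 0) :
    ∃ l : ℝ, W = l • U := by
  have hU0 : U 0 ≠ 0 ∨ U 1 ≠ 0 := by
    by_contra hc
    push_neg at hc
    exact hU (funext fun i => by fin_cases i <;> simp [hc.1, hc.2])
  unfold crossR at h
  rcases hU0 with h0 | h1
  · refine ⟨W 0 / U 0, funext fun i => ?_⟩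
    fin_cases i
    · show W 0 = (W 0 / U 0) * U 0
      field_simp
    · show W 1 = (W 0 / U 0) * U 1
      rw [div_mul_eq_mul_div, eq_div_iff h0]
      linear_combination h
  · refine ⟨W 1 / U 1, funext fun i => ?_⟩
    fin_cases i
    · show W 0 = (W 1 / U 1) * U 0
      rw [div_mul_eq_mul_div, eq_div_iff h1]
      linear_combination -h
    · show W 1 = (W 1 / U 1) * U 1
      field_simp

lemma cross_ball_zero {U p z₀ : Fin 2 → ℝ} {r : ℝ} (hr : 0 < r)
    (h : ∀ z ∈ Metric.ball z₀ r, crossR U (z - p) = 0) : U = 0 := by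
  have h0 := h z₀ (Metric.mem_ball_self hr)
  have m1 : z₀ + (fun _ => r/2) ∈ Metric.ball z₀ r := by
    rw [Metric.mem_ball, dist_eq_norm, add_sub_cancel_left]
    calc ‖(fun _ : Fin 2 => r/2)‖ ≤ ‖r/2‖ := pi_norm_const_le _
      _ < r := by rw [Real.norm_eq_abs, abs_of_pos (by linarith)]; linarith
  have m2 : z₀ + (fun i : Fin 2 => if i = 0 then r/2 else -(r/2)) ∈ Metric.ball z₀ r := by
    rw [Metric.mem_ball, dist_eq_norm, add_sub_cancel_left]
    have : ‖(fun i : Fin 2 => if i = 0 then r/2 else -(r/2))‖ ≤ r/2 := by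
      rw [pi_norm_le_iff_of_nonneg (by linarith)]
      intro i
      fin_cases i <;> simp <;> rw [abs_of_pos (by linarith)]
    linarith
  have h1 := h _ m1
  have h2 := h _ m2
  unfold crossR at h0 h1 h2
  simp only [Pi.sub_apply, Pi.add_apply] at h0 h1 h2
  norm_num at h2
  have e1 : (U 0 - U 1) * (r/2) = 0 := by linarith
  have e2 : (U 0 + U 1) * (r/2) = 0 := by linarith
  have hr2 : (r/2) ≠ 0 := by positivity
  have f1 := (mul_eq_zero.mp e1).resolve_right hr2
  have f2 := (mul_eq_zero.mp e2).resolve_right hr2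
  funext i
  fin_cases i <;> simp <;> linarith

lemma extreme_endpoint {F : Set (Fin 2 → ℝ)} {v a b : Fin 2 → ℝ}
    (hv : v ∈ F.extremePoints ℝ) (ha : a ∈ F) (hb : b ∈ F)
    (hseg : v ∈ segment ℝ a b) : v = a ∨ v = b := by
  by_contra hc
  push_neg at hc
  have hopen : v ∈ openSegment ℝ a b :=
    mem_openSegment_of_ne_left_right (Ne.symm hc.1) (Ne.symm hc.2) hseg
  have := (mem_extremePoints.mp hv).2 a ha b hb hopen
  exact hc.1 this.1.symm

lemma cross_frontier {F : Set (Fin 2 → ℝ)} (hclosed : IsClosed F)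
    {p q : Fin 2 → ℝ} (hp : p ∈ interior F) (hq : q ∉ F) :
    ∃ a b : ℝ, 0 ≤ a ∧ 0 ≤ b ∧ a + b = 1 ∧ (a • p + b • q) ∈ frontier F := by
  have hpF : p ∈ F := interior_subset hp
  set γ : ℝ → (Fin 2 → ℝ) := fun t => (1 - t) • p + t • q with hγ
  have hcont : Continuous γ := by
    apply Continuous.add
    · exact (continuous_sub_left _ ).smul continuous_const
    · exact continuous_id.smul continuous_const
  set T : Set ℝ := Set.Icc (0:ℝ) 1 ∩ γ ⁻¹' F with hT
  have hTclosed : IsClosed T := isClosed_Icc.inter (hclosed.preimage hcont)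
  have hT0 : (0:ℝ) ∈ T := by
    constructor
    · exact Set.mem_Icc.mpr ⟨le_refl _, zero_le_one⟩
    · show γ 0 ∈ F
      simp [hγ]
      exact hpF
  have hTne : T.Nonempty := ⟨0, hT0⟩
  have hTbdd : BddAbove T := ⟨1, fun t ht => ht.1.2⟩
  set t₀ := sSup T with ht₀
  have htT : t₀ ∈ T := hTclosed.csSup_mem hTne hTbdd
  have ht01 : t₀ ∈ Set.Icc (0:ℝ) 1 := htT.1
  have hγt : γ t₀ ∈ F := htT.2
  have htne1 : t₀ ≠ 1 := by
    intro h
    apply hq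
    have : γ 1 = q := by simp [hγ]
    rw [h, this] at hγt
    exact hγt
  have ht1 : t₀ < 1 := lt_of_le_of_ne ht01.2 htne1
  refine ⟨1 - t₀, t₀, by linarith, ht01.1, by ring, ?_⟩
  rw [hclosed.frontier_eq]
  refine ⟨hγt, fun hint => ?_⟩
  obtain ⟨δ, hδ, hball⟩ := Metric.isOpen_iff.mp isOpen_interior _ hint
  have hpq : p ≠ q := fun h => hq (h ▸ hpF)
  have hnorm : (0:ℝ) < ‖q - p‖ := by
    rw [norm_pos_iff]
    exact sub_ne_zero.mpr (Ne.symm hpq)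
  set δ' : ℝ := min (δ / (2 * ‖q - p‖)) ((1 - t₀)) with hδ'
  have hδ'pos : 0 < δ' := lt_min (by positivity) (by linarith)
  have htT' : t₀ + δ' ∈ T := by
    constructor
    · constructor
      · linarith [ht01.1]
      · have := min_le_right (δ / (2 * ‖q - p‖)) (1 - t₀)
        linarith
    · show γ (t₀ + δ') ∈ F
      apply interior_subset
      apply hball
      rw [Metric.mem_ball, dist_eq_norm]
      have hdiff : γ (t₀ + δ') - γ t₀ = δ' • (q - p) := by
        simp only [hγ]
        module
      rw [hdiff, norm_smul, Real.norm_eq_abs, abs_of_pos hδ'pos]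
      have h1 : δ' ≤ δ / (2 * ‖q - p‖) := min_le_left _ _
      calc δ' * ‖q - p‖ ≤ (δ / (2 * ‖q - p‖)) * ‖q - p‖ := by
              apply mul_le_mul_of_nonneg_right h1 (norm_nonneg _)
        _ = δ / 2 := by field_simp
        _ < δ := by linarith
  have : t₀ + δ' ≤ t₀ := le_csSup hTbdd htT' |>.trans_eq rfl
  linarith

lemma dir_unique {F : Set (Fin 2 → ℝ)} {z₀ : Fin 2 → ℝ} {r : ℝ} (hr : 0 < r)
    (hball : Metric.ball z₀ r ⊆ F)
    {v W W' : Fin 2 → ℝ} (hW : W ≠ 0) (hW' : W' ≠ 0)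
    (hvW : v + W ∈ F.extremePoints ℝ) (hvW' : v + W' ∈ F.extremePoints ℝ)
    (hv : v ∈ F)
    {σ : ℝ} (hσ : σ = 1 ∨ σ = -1)
    (h1 : ∀ z ∈ F, σ * crossR W (z - v) ≤ 0)
    (h2 : ∀ z ∈ F, σ * crossR W' (z - v) ≤ 0) : W = W' := by
  have hσne : σ ≠ 0 := by rcases hσ with h | h <;> rw [h] <;> norm_num
  have hWF : v + W ∈ F := hvW.1
  have hW'F : v + W' ∈ F := hvW'.1
  have e1 : σ * crossR W W' ≤ 0 := by
    have := h1 (v + W') hW'F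
    simpa using this
  have e2 : σ * crossR W' W ≤ 0 := by
    have := h2 (v + W) hWF
    simpa using this
  have hskew : crossR W' W = - crossR W W' := by unfold crossR; ring
  have hcc : crossR W W' = 0 := by
    rcases hσ with h | h <;> rw [h] at e1 e2 <;> rw [hskew] at e2 <;> linarith
  obtain ⟨l, hl⟩ := cross_parallel hW hcc
  have hlne : l ≠ 0 := by
    intro h; apply hW'; rw [hl, h, zero_smul]
  have hcrossW' : ∀ z ∈ F, σ * (l * crossR W (z - v)) ≤ 0 := by
    intro z hz
    have := h2 z hz
    rw [hl] at this
    convert this using 2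
    unfold crossR
    simp only [Pi.smul_apply, smul_eq_mul]
    ring
  rcases lt_trichotomy l 0 with hlt | heq | hgt
  · exfalso
    have hzero : ∀ z ∈ Metric.ball z₀ r, crossR W (z - v) = 0 := by
      intro z hz
      have hA := h1 z (hball hz)
      have hB := hcrossW' z (hball hz)
      rcases hσ with h | h <;> rw [h] at hA hB <;> nlinarith
    exact hW (cross_ball_zero hr hzero)
  · exact absurd heq hlne
  · rcases lt_trichotomy l 1 with hl1 | hl1 | hl1
    · exfalso
      have hmem : v + W' ∈ openSegment ℝ v (v + W) := by
        refine ⟨1 - l, l, by linarith, hgt, by ring, ?_⟩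
        rw [hl]
        module
      have := (mem_extremePoints.mp hvW').2 v hv (v + W) hWF hmem
      have : v = v + W' := this.1
      apply hW'
      have := congrArg (fun x => x - v) this
      simpa using this.symm
    · rw [hl, hl1, one_smul]
    · exfalso
      have hmem : v + W ∈ openSegment ℝ v (v + W') := by
        refine ⟨1 - 1/l, 1/l, by rw [sub_pos]; exact (div_lt_one (by linarith)).mpr hl1,
          by positivity, by ring, ?_⟩
        rw [hl]
        have hW1 : (1/l) • (l • W) = W := by
          rw [smul_smul]
          rw [one_div, inv_mul_cancel₀ (by linarith : l ≠ 0), one_smul]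
        rw [smul_add, hW1]
        module
      have := (mem_extremePoints.mp hvW).2 v hv (v + W') hW'F hmem
      have : v = v + W := this.1
      apply hW
      have := congrArg (fun x => x - v) this
      simpa using this.symm

lemma second_edge {F : Set (Fin 2 → ℝ)} (hconv : Convex ℝ F) (hclosed : IsClosed F)
    {z₀ : Fin 2 → ℝ} {r : ℝ} (hr : 0 < r) (hball : Metric.ball z₀ r ⊆ interior F)
    {v A : Fin 2 → ℝ} (hv : v ∈ F.extremePoints ℝ) (hA : A ∈ F) (hAv : A ≠ v)
    {K : Set (Fin 2 → ℝ)} (hK : IsClosed K) (hvK : v ∉ K)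
    (hfront : frontier F ⊆ segment ℝ A v ∪ K) : False := by
  have hvF : v ∈ F := hv.1
  obtain ⟨ε, hε, hballK⟩ := Metric.isOpen_iff.mp hK.isOpen_compl v hvK
  set ψ : (Fin 2 → ℝ) → ℝ := fun x => crossR (v - A) (x - v) with hψ
  have hzex : ∃ z ∈ Metric.ball z₀ r, ψ z ≠ 0 := by
    by_contra hc
    push_neg at hc
    have : v - A = 0 := cross_ball_zero hr hc
    exact hAv (by
      ext i
      have := congrFun this i
      simp only [Pi.sub_apply, Pi.zero_apply] at this
      linarith)
  obtain ⟨z, hzball, hzψ⟩ := hzex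
  have hzint : z ∈ interior F := hball hzball
  have hqnot : ∀ t : ℝ, 0 < t → v + t • (v - A) ∉ F := by
    intro t ht hqF
    have hmem : v ∈ openSegment ℝ A (v + t • (v - A)) := by
      refine ⟨t/(1+t), 1/(1+t), by positivity, by positivity, by field_simp; ring, ?_⟩
      match_scalars <;> field_simp <;> ring
    have := (mem_extremePoints.mp hv).2 A hA _ hqF hmem
    exact hAv this.1
  have hzv : z ≠ v := by
    intro h; apply hzψ; rw [hψ, h]; simp [crossR]
  set nz : ℝ := ‖z - v‖ + 1 with hnz
  have hnzpos : (0:ℝ) < nz := by positivity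
  set nA : ℝ := ‖v - A‖ + 1 with hnA
  have hnApos : (0:ℝ) < nA := by positivity
  set s : ℝ := min (1/2) (ε / (2 * nz)) with hs
  have hspos : 0 < s := lt_min (by norm_num) (by positivity)
  have hs1 : s < 1 := lt_of_le_of_lt (min_le_left _ _) (by norm_num)
  set t : ℝ := ε / (2 * nA) with ht
  have htpos : 0 < t := by positivity
  set p : Fin 2 → ℝ := v + s • (z - v) with hp
  set q : Fin 2 → ℝ := v + t • (v - A) with hq
  have hpint : p ∈ interior F := by
    have : p ∈ openSegment ℝ z v := by
      refine ⟨s, 1 - s, hspos, by linarith, by ring, ?_⟩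
      module
    exact hconv.openSegment_interior_closure_subset_interior hzint (subset_closure hvF) this
  have hqF : q ∉ F := hqnot t htpos
  have hpd : ‖p - v‖ < ε / 2 := by
    have : p - v = s • (z - v) := by rw [hp]; module
    rw [this, norm_smul, Real.norm_eq_abs, abs_of_pos hspos]
    have h1 : s ≤ ε / (2 * nz) := min_le_right _ _
    have h2 : ‖z - v‖ < nz := by rw [hnz]; linarith
    calc s * ‖z - v‖ ≤ (ε / (2 * nz)) * ‖z - v‖ := by
          apply mul_le_mul_of_nonneg_right h1 (norm_nonneg _)
      _ < (ε / (2 * nz)) * nz := by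
          apply mul_lt_mul_of_pos_left h2 (by positivity)
      _ = ε / 2 := by field_simp
  have hqd : ‖q - v‖ < ε / 2 := by
    have : q - v = t • (v - A) := by rw [hq]; module
    rw [this, norm_smul, Real.norm_eq_abs, abs_of_pos htpos]
    have h2 : ‖v - A‖ < nA := by rw [hnA]; linarith
    calc t * ‖v - A‖ < t * nA := by apply mul_lt_mul_of_pos_left h2 htpos
      _ = ε / 2 := by rw [ht]; field_simp
  obtain ⟨a, b, ha, hb, hab, hw⟩ := cross_frontier hclosed hpint hqF
  set w : Fin 2 → ℝ := a • p + b • q with hwdef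
  have hwball : w ∈ Metric.ball v ε := by
    rw [Metric.mem_ball, dist_eq_norm]
    have : w - v = a • (p - v) + b • (q - v) := by
      rw [hwdef]
      match_scalars <;> first | linear_combination -hab | linear_combination hab | ring1
    rw [this]
    calc ‖a • (p - v) + b • (q - v)‖ ≤ ‖a • (p - v)‖ + ‖b • (q - v)‖ := norm_add_le _ _
      _ = a * ‖p - v‖ + b * ‖q - v‖ := by
          rw [norm_smul, norm_smul, Real.norm_eq_abs, Real.norm_eq_abs,
            abs_of_nonneg ha, abs_of_nonneg hb]
      _ ≤ a * (ε/2) + b * (ε/2) := by gcongr <;> linarith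
      _ = ε / 2 := by rw [← add_mul, hab]; ring
      _ < ε := by linarith
  have hwseg : w ∈ segment ℝ A v := by
    rcases hfront hw with h | h
    · exact h
    · exact absurd h (hballK hwball)
  have hψw0 : ψ w = 0 := by
    obtain ⟨α, β, hα, hβ, hαβ, hcomb⟩ := hwseg
    rw [hψ, ← hcomb]
    show crossR (v - A) ((α • A + β • v) - v) = 0
    have : (α • A + β • v) - v = (-α) • (v - A) := by
      have hβ' : β = 1 - α := by linarith
      rw [hβ']; module
    rw [this]
    simp only [crossR, Pi.smul_apply, Pi.sub_apply, smul_eq_mul]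
    ring
  have haz : a ≠ 0 := by
    intro h
    have hb1 : b = 1 := by linarith
    have hw' : w = q := by rw [hwdef, h, hb1, zero_smul, zero_add, one_smul]
    exact hqF (hclosed.frontier_subset (hw' ▸ hw))
  have hψw : ψ w = a * (s * ψ z) := by
    rw [hψ, hwdef]
    show crossR (v - A) ((a • p + b • q) - v) = a * (s * crossR (v - A) (z - v))
    have hexp : (a • p + b • q) - v = (a * s) • (z - v) + (b * t) • (v - A) := by
      rw [hp, hq]
      match_scalars <;> first | linear_combination -hab | linear_combination hab | ring1
    rw [hexp]
    simp only [crossR, Pi.add_apply, Pi.smul_apply, Pi.sub_apply, smul_eq_mul]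
    ring
  rw [hψw0] at hψw
  have hne0 : s * ψ z ≠ 0 := mul_ne_zero (ne_of_gt hspos) hzψ
  exact hne0 (by
    rcases mul_eq_zero.mp hψw.symm with h | h
    · exact absurd h haz
    · exact h)

lemma nt_aux (c v : Fin 2 → ℤ) (hp : Int.gcd (c 0) (c 1) = 1)
    (horth : c 0 * v 0 + c 1 * v 1 = 0) :
    ∃ t : ℤ, v 0 = -(t * c 1) ∧ v 1 = t * c 0 := by
  by_cases hc1 : c 1 = 0
  · have hc0 : c 0 * c 0 = 1 := by
      have := hp
      rw [hc1] at this
      simp [Int.gcd] at this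
      rcases Int.natAbs_eq (c 0) with h | h <;> rw [h] <;> rw [this] <;> ring
    refine ⟨v 1 * c 0, ?_, ?_⟩
    · rw [hc1] at horth ⊢
      have : c 0 * v 0 = 0 := by linarith
      rcases mul_eq_zero.mp this with h | h
      · exfalso; rw [h] at hc0; simp at hc0
      · rw [h]; ring
    · rw [mul_assoc, hc0, mul_one]
  · have hdvd : c 1 ∣ c 0 * v 0 := ⟨-(v 1), by linarith⟩
    have hcop : IsCoprime (c 1) (c 0) := (Int.isCoprime_iff_gcd_eq_one.mpr hp).symm
    have hdvd0 : c 1 ∣ v 0 := hcop.dvd_of_dvd_mul_left hdvd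
    obtain ⟨s, hs⟩ := hdvd0
    refine ⟨-s, ?_, ?_⟩
    · rw [hs]; ring
    · have : c 1 * (c 0 * s + v 1) = 0 := by rw [hs] at horth; linarith
      have h2 := (mul_eq_zero.mp this).resolve_left hc1
      linarith

lemma gcd_rel (c v : Fin 2 → ℤ) (hv : ¬(v 0 = 0 ∧ v 1 = 0)) (hp : Int.gcd (c 0) (c 1) = 1)
    (horth : c 0 * v 0 + c 1 * v 1 = 0) :
    ((Int.gcd (v 0) (v 1) : ℤ) * c 0 = v 1 ∧ (Int.gcd (v 0) (v 1) : ℤ) * c 1 = -(v 0)) ∨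
    ((Int.gcd (v 0) (v 1) : ℤ) * c 0 = -(v 1) ∧ (Int.gcd (v 0) (v 1) : ℤ) * c 1 = v 0) := by
  obtain ⟨t, h0, h1⟩ := nt_aux c v hp horth
  have ht0 : t ≠ 0 := by
    rintro rfl
    simp only [zero_mul, neg_zero] at h0 h1
    exact hv ⟨h0, h1⟩
  have hg : (Int.gcd (v 0) (v 1) : ℤ) = |t| := by
    have e1 : v 0 = t * (-(c 1)) := by rw [h0]; ring
    have e2 : v 1 = t * c 0 := h1
    rw [e1, e2, Int.gcd_mul_left]
    have : Int.gcd (-(c 1)) (c 0) = 1 := by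
      rw [show Int.gcd (-(c 1)) (c 0) = Int.gcd (c 1) (c 0) from by simp [Int.gcd],
        Int.gcd_comm, hp]
    rw [this]
    rw [Nat.cast_mul, Nat.cast_one, mul_one, Int.abs_eq_natAbs]
  rcases lt_or_gt_of_ne ht0 with hneg | hpos
  · right
    rw [hg, abs_of_neg hneg]
    constructor
    · rw [h1]; ring
    · rw [h0]; ring
  · left
    rw [hg, abs_of_pos hpos]
    constructor
    · rw [h1]
    · rw [h0]; ring

/-- Let `F` be an empty integral polygon with edge set `Edg` (each edge recorded by its two
endpoints, which are vertices of `F`; the edges cover the boundary and are recorded without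
repetition).  For each edge `S` let `ℓ_S` be its support function (a primitive integral
affine function vanishing on `S` and nonnegative on `F`) and `c_S` the lattice length of `S`.
Then `∑_{S ⊂ ∂F} c_S · ℓ_S` is a constant function on `ℝ²`. -/
theorem stmt8 (S : Finset (Fin 2 → ℤ)) (F : Set (Fin 2 → ℝ))
    (hF : F = convexHull ℝ (castPt '' (S : Set (Fin 2 → ℤ))))
    (hspan : affineSpan ℝ F = ⊤)
    (hempty : ∀ x ∈ interior F, ¬ IsLatticePt x)
    (Edg : Finset ((Fin 2 → ℤ) × (Fin 2 → ℤ)))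
    (hne : ∀ e ∈ Edg, e.1 ≠ e.2)
    (hvert : ∀ e ∈ Edg, castPt e.1 ∈ F.extremePoints ℝ ∧ castPt e.2 ∈ F.extremePoints ℝ)
    (hsub : ∀ e ∈ Edg, segment ℝ (castPt e.1) (castPt e.2) ⊆ frontier F)
    (hcover : frontier F ⊆ ⋃ e ∈ Edg, segment ℝ (castPt e.1) (castPt e.2))
    (hinj : ∀ e ∈ Edg, ∀ e' ∈ Edg,
      segment ℝ (castPt e.1) (castPt e.2) = segment ℝ (castPt e'.1) (castPt e'.2) → e = e')
    (c : (Fin 2 → ℤ) × (Fin 2 → ℤ) → Fin 2 → ℤ)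
    (d : (Fin 2 → ℤ) × (Fin 2 → ℤ) → ℤ)
    (hprim : ∀ e ∈ Edg, Int.gcd (c e 0) (c e 1) = 1)
    (hzero : ∀ e ∈ Edg, affZ (c e) (d e) (castPt e.1) = 0 ∧ affZ (c e) (d e) (castPt e.2) = 0)
    (hnonneg : ∀ e ∈ Edg, ∀ x ∈ F, 0 ≤ affZ (c e) (d e) x) :
    ∀ x y : Fin 2 → ℝ,
      ∑ e ∈ Edg, (Int.gcd (e.2 0 - e.1 0) (e.2 1 - e.1 1) : ℝ) * affZ (c e) (d e) x =
      ∑ e ∈ Edg, (Int.gcd (e.2 0 - e.1 0) (e.2 1 - e.1 1) : ℝ) * affZ (c e) (d e) y := by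
  classical
  intro x y
  -- Basic structure of F
  have hconv : Convex ℝ F := hF ▸ convex_convexHull ℝ _
  have hclosed : IsClosed F := by
    rw [hF]
    exact ((S.finite_toSet.image castPt).isCompact_convexHull ℝ).isClosed
  have hint : (interior F).Nonempty := by
    rw [hconv.interior_nonempty_iff_affineSpan_eq_top]
    exact hspan
  obtain ⟨z₀, hz₀⟩ := hint
  obtain ⟨r, hr, hball⟩ : ∃ r > 0, Metric.ball z₀ r ⊆ interior F := by
    obtain ⟨r, hr, h⟩ := Metric.isOpen_iff.mp isOpen_interior z₀ hz₀
    exact ⟨r, hr, h⟩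
  have hballF : Metric.ball z₀ r ⊆ F := hball.trans interior_subset
  -- Construction of heads and tails
  have key : ∀ e : (Fin 2 → ℤ) × (Fin 2 → ℤ), ∃ HT : (Fin 2 → ℤ) × (Fin 2 → ℤ),
      e ∈ Edg →
      ((HT.1 = e.2 ∧ HT.2 = e.1) ∨ (HT.1 = e.1 ∧ HT.2 = e.2)) ∧
      ((Int.gcd (e.2 0 - e.1 0) (e.2 1 - e.1 1) : ℤ) * c e 0 = HT.1 1 - HT.2 1) ∧
      ((Int.gcd (e.2 0 - e.1 0) (e.2 1 - e.1 1) : ℤ) * c e 1 = -(HT.1 0 - HT.2 0)) := by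
    intro e
    by_cases he : e ∈ Edg
    · have h1 := (hzero e he).1
      have h2 := (hzero e he).2
      unfold affZ castPt at h1 h2
      have hR : (c e 0 : ℝ) * ((e.2 0 : ℝ) - (e.1 0 : ℝ))
          + (c e 1 : ℝ) * ((e.2 1 : ℝ) - (e.1 1 : ℝ)) = 0 := by linarith
      have horth : c e 0 * (e.2 0 - e.1 0) + c e 1 * (e.2 1 - e.1 1) = 0 := by
        exact_mod_cast hR
      have hvne : ¬((e.2 0 - e.1 0 = 0) ∧ (e.2 1 - e.1 1 = 0)) := by
        rintro ⟨ha, hb⟩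
        apply hne e he
        have h0 : e.1 0 = e.2 0 := by omega
        have h1' : e.1 1 = e.2 1 := by omega
        funext i
        fin_cases i
        · exact h0
        · exact h1'
      rcases gcd_rel (c e) (fun i => e.2 i - e.1 i) hvne (hprim e he) horth
        with ⟨ha, hb⟩ | ⟨ha, hb⟩
      · exact ⟨(e.2, e.1), fun _ => ⟨Or.inl ⟨rfl, rfl⟩, by simpa using ha, by
          simpa using hb⟩⟩
      · refine ⟨(e.1, e.2), fun _ => ⟨Or.inr ⟨rfl, rfl⟩, ?_, ?_⟩⟩
        · simp only at ha ⊢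
          rw [ha]; ring
        · simp only at hb ⊢
          rw [hb]; ring
    · exact ⟨(e.1, e.2), fun h => absurd h he⟩
  choose HT hkey using key
  set Hd : (Fin 2 → ℤ) × (Fin 2 → ℤ) → (Fin 2 → ℤ) := fun e => (HT e).1 with hHd
  set Tl : (Fin 2 → ℤ) × (Fin 2 → ℤ) → (Fin 2 → ℤ) := fun e => (HT e).2 with hTl
  have hpair : ∀ e ∈ Edg, (Hd e = e.2 ∧ Tl e = e.1) ∨ (Hd e = e.1 ∧ Tl e = e.2) :=
    fun e he => (hkey e he).1
  have hHTne : ∀ e ∈ Edg, Hd e ≠ Tl e := by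
    intro e he
    rcases hpair e he with ⟨h1, h2⟩ | ⟨h1, h2⟩ <;> rw [h1, h2]
    · exact (hne e he).symm
    · exact hne e he
  have hextremeH : ∀ e ∈ Edg, castPt (Hd e) ∈ F.extremePoints ℝ := by
    intro e he
    rcases hpair e he with ⟨h1, _⟩ | ⟨h1, _⟩ <;> rw [h1]
    · exact (hvert e he).2
    · exact (hvert e he).1
  have hextremeT : ∀ e ∈ Edg, castPt (Tl e) ∈ F.extremePoints ℝ := by
    intro e he
    rcases hpair e he with ⟨_, h2⟩ | ⟨_, h2⟩ <;> rw [h2]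
    · exact (hvert e he).1
    · exact (hvert e he).2
  have hsegHT : ∀ e ∈ Edg, segment ℝ (castPt e.1) (castPt e.2)
      = segment ℝ (castPt (Tl e)) (castPt (Hd e)) := by
    intro e he
    rcases hpair e he with ⟨h1, h2⟩ | ⟨h1, h2⟩ <;> rw [h1, h2]
    exact segment_symm ℝ _ _
  have hsubR : ∀ e ∈ Edg,
      ((Int.gcd (e.2 0 - e.1 0) (e.2 1 - e.1 1) : ℝ) * (c e 0 : ℝ)
        = (Hd e 1 : ℝ) - (Tl e 1 : ℝ)) ∧
      ((Int.gcd (e.2 0 - e.1 0) (e.2 1 - e.1 1) : ℝ) * (c e 1 : ℝ)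
        = -((Hd e 0 : ℝ) - (Tl e 0 : ℝ))) := by
    intro e he
    constructor
    · exact_mod_cast (hkey e he).2.1
    · exact_mod_cast (hkey e he).2.2
  -- the cross-product inequality
  have hcrossB : ∀ e ∈ Edg, ∀ B : Fin 2 → ℤ, (B = e.1 ∨ B = e.2) → ∀ z ∈ F,
      crossR (castPt (Hd e) - castPt (Tl e)) (z - castPt B) ≤ 0 := by
    intro e he B hB z hz
    have h0 : affZ (c e) (d e) (castPt B) = 0 := by
      rcases hB with rfl | rfl
      · exact (hzero e he).1
      · exact (hzero e he).2
    have h1 := hnonneg e he z hz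
    unfold affZ at h0 h1
    unfold castPt at h0
    have hcexpr : 0 ≤ (c e 0 : ℝ) * (z 0 - (B 0 : ℝ)) + (c e 1 : ℝ) * (z 1 - (B 1 : ℝ)) := by
      linarith
    have hg0 : (0:ℝ) ≤ (Int.gcd (e.2 0 - e.1 0) (e.2 1 - e.1 1) : ℝ) := Nat.cast_nonneg _
    have hmul : 0 ≤ (Int.gcd (e.2 0 - e.1 0) (e.2 1 - e.1 1) : ℝ)
        * ((c e 0 : ℝ) * (z 0 - (B 0 : ℝ)) + (c e 1 : ℝ) * (z 1 - (B 1 : ℝ))) :=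
      mul_nonneg hg0 hcexpr
    obtain ⟨hsub0, hsub1⟩ := hsubR e he
    have heq : crossR (castPt (Hd e) - castPt (Tl e)) (z - castPt B)
        = -((Int.gcd (e.2 0 - e.1 0) (e.2 1 - e.1 1) : ℝ)
          * ((c e 0 : ℝ) * (z 0 - (B 0 : ℝ)) + (c e 1 : ℝ) * (z 1 - (B 1 : ℝ)))) := by
      unfold crossR castPt
      simp only [Pi.sub_apply]
      linear_combination (z 0 - (B 0 : ℝ)) * hsub0 + (z 1 - (B 1 : ℝ)) * hsub1
    linarith
  have hHB : ∀ e ∈ Edg, Hd e = e.1 ∨ Hd e = e.2 := by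
    intro e he
    rcases hpair e he with ⟨h1, _⟩ | ⟨h1, _⟩
    · exact Or.inr h1
    · exact Or.inl h1
  have hTB : ∀ e ∈ Edg, Tl e = e.1 ∨ Tl e = e.2 := by
    intro e he
    rcases hpair e he with ⟨_, h2⟩ | ⟨_, h2⟩
    · exact Or.inl h2
    · exact Or.inr h2
  -- injectivity of heads
  have headInj : ∀ e ∈ Edg, ∀ e' ∈ Edg, Hd e = Hd e' → e = e' := by
    intro e he e' he' hEq
    have hW : castPt (Tl e) - castPt (Hd e) ≠ 0 :=
      sub_ne_zero.mpr (fun h => (hHTne e he) (castPt_inj h).symm)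
    have hW' : castPt (Tl e') - castPt (Hd e) ≠ 0 := by
      rw [hEq]
      exact sub_ne_zero.mpr (fun h => (hHTne e' he') (castPt_inj h).symm)
    have hvW : castPt (Hd e) + (castPt (Tl e) - castPt (Hd e)) ∈ F.extremePoints ℝ := by
      have h : castPt (Hd e) + (castPt (Tl e) - castPt (Hd e)) = castPt (Tl e) := by abel
      rw [h]
      exact hextremeT e he
    have hvW' : castPt (Hd e) + (castPt (Tl e') - castPt (Hd e)) ∈ F.extremePoints ℝ := by
      have h : castPt (Hd e) + (castPt (Tl e') - castPt (Hd e)) = castPt (Tl e') := by abel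
      rw [h]
      exact hextremeT e' he'
    have h1 : ∀ z ∈ F, (-1:ℝ) * crossR (castPt (Tl e) - castPt (Hd e)) (z - castPt (Hd e)) ≤ 0 := by
      intro z hz
      have hc := hcrossB e he (Hd e) (hHB e he) z hz
      have heqq : (-1:ℝ) * crossR (castPt (Tl e) - castPt (Hd e)) (z - castPt (Hd e))
          = crossR (castPt (Hd e) - castPt (Tl e)) (z - castPt (Hd e)) := by
        unfold crossR
        simp only [Pi.sub_apply]
        ring
      rw [heqq]
      exact hc
    have h2 : ∀ z ∈ F, (-1:ℝ) * crossR (castPt (Tl e') - castPt (Hd e)) (z - castPt (Hd e)) ≤ 0 := by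
      intro z hz
      have hc := hcrossB e' he' (Hd e') (hHB e' he') z hz
      have heqq : (-1:ℝ) * crossR (castPt (Tl e') - castPt (Hd e)) (z - castPt (Hd e))
          = crossR (castPt (Hd e) - castPt (Tl e')) (z - castPt (Hd e)) := by
        unfold crossR
        simp only [Pi.sub_apply]
        ring
      rw [heqq, hEq]
      exact hc
    have hWW := dir_unique hr hballF hW hW' hvW hvW' (hextremeH e he).1 (Or.inr rfl) h1 h2
    have hTT : Tl e = Tl e' := by
      apply castPt_inj
      have := sub_left_inj.mp hWW
      exact this
    apply hinj e he e' he'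
    rw [hsegHT e he, hsegHT e' he', hTT, hEq]
  -- injectivity of tails
  have tailInj : ∀ e ∈ Edg, ∀ e' ∈ Edg, Tl e = Tl e' → e = e' := by
    intro e he e' he' hEq
    have hW : castPt (Hd e) - castPt (Tl e) ≠ 0 :=
      sub_ne_zero.mpr (fun h => (hHTne e he) (castPt_inj h))
    have hW' : castPt (Hd e') - castPt (Tl e) ≠ 0 := by
      rw [hEq]
      exact sub_ne_zero.mpr (fun h => (hHTne e' he') (castPt_inj h))
    have hvW : castPt (Tl e) + (castPt (Hd e) - castPt (Tl e)) ∈ F.extremePoints ℝ := by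
      have h : castPt (Tl e) + (castPt (Hd e) - castPt (Tl e)) = castPt (Hd e) := by abel
      rw [h]
      exact hextremeH e he
    have hvW' : castPt (Tl e) + (castPt (Hd e') - castPt (Tl e)) ∈ F.extremePoints ℝ := by
      have h : castPt (Tl e) + (castPt (Hd e') - castPt (Tl e)) = castPt (Hd e') := by abel
      rw [h]
      exact hextremeH e' he'
    have h1 : ∀ z ∈ F, (1:ℝ) * crossR (castPt (Hd e) - castPt (Tl e)) (z - castPt (Tl e)) ≤ 0 := by
      intro z hz
      rw [one_mul]
      exact hcrossB e he (Tl e) (hTB e he) z hz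
    have h2 : ∀ z ∈ F, (1:ℝ) * crossR (castPt (Hd e') - castPt (Tl e)) (z - castPt (Tl e)) ≤ 0 := by
      intro z hz
      rw [one_mul, hEq]
      exact hcrossB e' he' (Tl e') (hTB e' he') z hz
    have hWW := dir_unique hr hballF hW hW' hvW hvW' (hextremeT e he).1 (Or.inl rfl) h1 h2
    have hHH : Hd e = Hd e' := by
      apply castPt_inj
      exact sub_left_inj.mp hWW
    apply hinj e he e' he'
    rw [hsegHT e he, hsegHT e' he', hHH, hEq]
  -- every head is a tail
  have surjHd : ∀ e ∈ Edg, ∃ e' ∈ Edg, Tl e' = Hd e := by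
    intro e he
    by_contra hc
    push_neg at hc
    have honly : ∀ e' ∈ Edg, castPt (Hd e) ∈ segment ℝ (castPt e'.1) (castPt e'.2) → e' = e := by
      intro e' he' hmem
      rw [hsegHT e' he'] at hmem
      rcases extreme_endpoint (hextremeH e he) (hextremeT e' he').1 (hextremeH e' he').1 hmem
        with h | h
      · exact absurd (castPt_inj h.symm) (hc e' he')
      · exact headInj e' he' e he (castPt_inj h.symm)
    set K : Set (Fin 2 → ℝ) :=
      ⋃ e' ∈ (Edg.erase e), segment ℝ (castPt e'.1) (castPt e'.2) with hK
    have hKclosed : IsClosed K := by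
      apply Set.Finite.isClosed_biUnion (Finset.finite_toSet _)
      intro e' _
      exact isClosed_segment' _ _
    have hvK : castPt (Hd e) ∉ K := by
      rw [hK]
      intro hmem
      rcases Set.mem_iUnion₂.mp hmem with ⟨e', he', hm⟩
      have heq : e' = e := honly e' (Finset.mem_of_mem_erase he') hm
      exact (Finset.ne_of_mem_erase he') heq
    have hfr : frontier F ⊆ segment ℝ (castPt (Tl e)) (castPt (Hd e)) ∪ K := by
      intro w hw
      rcases Set.mem_iUnion₂.mp (hcover hw) with ⟨e', he', hmem⟩
      by_cases heq : e' = e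
      · left
        rw [← hsegHT e he]
        rw [heq] at hmem
        exact hmem
      · right
        exact Set.mem_biUnion (Finset.mem_erase.mpr ⟨heq, he'⟩) hmem
    exact second_edge hconv hclosed hr hball (hextremeH e he) (hextremeT e he).1
      (fun h => (hHTne e he) (castPt_inj h).symm) hKclosed hvK hfr
  -- every tail is a head
  have surjTl : ∀ e ∈ Edg, ∃ e' ∈ Edg, Hd e' = Tl e := by
    intro e he
    by_contra hc
    push_neg at hc
    have honly : ∀ e' ∈ Edg, castPt (Tl e) ∈ segment ℝ (castPt e'.1) (castPt e'.2) → e' = e := by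
      intro e' he' hmem
      rw [hsegHT e' he'] at hmem
      rcases extreme_endpoint (hextremeT e he) (hextremeT e' he').1 (hextremeH e' he').1 hmem
        with h | h
      · exact tailInj e' he' e he (castPt_inj h.symm)
      · exact absurd (castPt_inj h.symm) (hc e' he')
    set K : Set (Fin 2 → ℝ) :=
      ⋃ e' ∈ (Edg.erase e), segment ℝ (castPt e'.1) (castPt e'.2) with hK
    have hKclosed : IsClosed K := by
      apply Set.Finite.isClosed_biUnion (Finset.finite_toSet _)
      intro e' _
      exact isClosed_segment' _ _
    have hvK : castPt (Tl e) ∉ K := by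
      rw [hK]
      intro hmem
      rcases Set.mem_iUnion₂.mp hmem with ⟨e', he', hm⟩
      have heq : e' = e := honly e' (Finset.mem_of_mem_erase he') hm
      exact (Finset.ne_of_mem_erase he') heq
    have hfr : frontier F ⊆ segment ℝ (castPt (Hd e)) (castPt (Tl e)) ∪ K := by
      intro w hw
      rcases Set.mem_iUnion₂.mp (hcover hw) with ⟨e', he', hmem⟩
      by_cases heq : e' = e
      · left
        rw [segment_symm, ← hsegHT e he]
        rw [heq] at hmem
        exact hmem
      · right
        exact Set.mem_biUnion (Finset.mem_erase.mpr ⟨heq, he'⟩) hmem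
    exact second_edge hconv hclosed hr hball (hextremeT e he) (hextremeH e he).1
      (fun h => (hHTne e he) (castPt_inj h)) hKclosed hvK hfr
  -- image equality and sums
  have himg : Edg.image Hd = Edg.image Tl := by
    apply Finset.ext
    intro p
    simp only [Finset.mem_image]
    constructor
    · rintro ⟨e, he, rfl⟩
      obtain ⟨e', he', h⟩ := surjHd e he
      exact ⟨e', he', h⟩
    · rintro ⟨e, he, rfl⟩
      obtain ⟨e', he', h⟩ := surjTl e he
      exact ⟨e', he', h⟩
  have hsum : ∀ i : Fin 2, (∑ e ∈ Edg, (Hd e i : ℝ)) = ∑ e ∈ Edg, (Tl e i : ℝ) := by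
    intro i
    have h1 : (∑ p ∈ Edg.image Hd, (p i : ℝ)) = ∑ e ∈ Edg, (Hd e i : ℝ) :=
      Finset.sum_image (fun e he e' he' h => headInj e he e' he' h)
    have h2 : (∑ p ∈ Edg.image Tl, (p i : ℝ)) = ∑ e ∈ Edg, (Tl e i : ℝ) :=
      Finset.sum_image (fun e he e' he' h => tailInj e he e' he' h)
    rw [← h1, ← h2, himg]
  -- final computation
  rw [← sub_eq_zero, ← Finset.sum_sub_distrib]
  have hterm : ∀ e ∈ Edg,
      (Int.gcd (e.2 0 - e.1 0) (e.2 1 - e.1 1) : ℝ) * affZ (c e) (d e) x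
        - (Int.gcd (e.2 0 - e.1 0) (e.2 1 - e.1 1) : ℝ) * affZ (c e) (d e) y
      = ((Hd e 1 : ℝ) - (Tl e 1 : ℝ)) * (x 0 - y 0)
        - ((Hd e 0 : ℝ) - (Tl e 0 : ℝ)) * (x 1 - y 1) := by
    intro e he
    obtain ⟨hsub0, hsub1⟩ := hsubR e he
    unfold affZ
    linear_combination (x 0 - y 0) * hsub0 + (x 1 - y 1) * hsub1
  rw [Finset.sum_congr rfl hterm, Finset.sum_sub_distrib, ← Finset.sum_mul, ← Finset.sum_mul,
    Finset.sum_sub_distrib, Finset.sum_sub_distrib, hsum 0, hsum 1, sub_self, sub_self,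
    zero_mul, zero_mul, sub_self]
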